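/- Consider the n-fold system A x = b where the lower part of the matrix consists of blocks (1,...,1) (so block i of x must sum to b_{r+i}), the matrices A_i ∈ ℤ^{r×t_i} have entries of absolute value at most Δ, and the system has a nonnegative integer solution. Then it has a nonnegative integer solution x = (x₁,...,xₙ) in which every block satisfies |supp(xₖ)| ≤ 2(r+1) log₂(4(r+1)Δ). -/

import Mathlib

open Finset

/-- Tangent-line bound for `logb 2`. -/
lemma logb_tangent_aux {a x : ℝ} (ha : 0 < a) (hx : a ≤ x) :
    Real.logb 2 x ≤ Real.logb 2 a + (x - a) / (a * Real.log 2) := by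
  have h2 : (0:ℝ) < Real.log 2 := Real.log_pos one_lt_two
  have hx0 : 0 < x := ha.trans_le hx
  have key : Real.log x ≤ Real.log a + (x - a) / a := by
    have h := Real.log_le_sub_one_of_pos (show (0:ℝ) < x / a by positivity)
    rw [Real.log_div hx0.ne' ha.ne'] at h
    have e : x / a - 1 = (x - a) / a := by field_simp
    linarith [e ▸ h]
  have e2 : (x - a) / (a * Real.log 2) = ((x - a) / a) / Real.log 2 := by
    rw [div_div]
  rw [Real.logb, Real.logb, e2, ← add_div]
  gcongr

/-- The Eisenbrand–Shmonin counting computation: if `2^s ≤ (2sΔ+1)^m` then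
`s ≤ 2 m log₂(4 m Δ)`. -/
lemma analytic_aux (m Δ s : ℕ) (hm : 1 ≤ m) (hΔ : 1 ≤ Δ)
    (h : 2 ^ s ≤ (2 * s * Δ + 1) ^ m) :
    (s : ℝ) ≤ 2 * m * Real.logb 2 (4 * m * Δ) := by
  by_contra hcon
  push_neg at hcon
  have hm1 : (1:ℝ) ≤ m := by exact_mod_cast hm
  have hΔ1 : (1:ℝ) ≤ Δ := by exact_mod_cast hΔ
  have hln : (0.6931471803:ℝ) < Real.log 2 := Real.log_two_gt_d9
  have hlnpos : (0:ℝ) < Real.log 2 := by linarith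
  set L : ℝ := Real.logb 2 (4 * m * Δ) with hLdef
  have h4 : (4:ℝ) ≤ 4 * m * Δ := by nlinarith
  have hL2 : (2:ℝ) ≤ L := by
    have h1 : Real.logb 2 4 ≤ L :=
      Real.logb_le_logb_of_le one_lt_two (by norm_num) h4
    have h2 : Real.logb 2 4 = 2 := by
      rw [show (4:ℝ) = 2 ^ (2:ℕ) by norm_num, Real.logb_pow,
        Real.logb_self_eq_one one_lt_two]
      norm_num
    linarith
  set S0 : ℝ := 2 * m * L with hS0def
  have hS0ge : (4:ℝ) ≤ S0 := by nlinarith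
  have hS0pos : (0:ℝ) < S0 := by linarith
  have hsS0 : S0 < s := hcon
  have hs1 : (1:ℝ) ≤ s := by linarith
  have hspos : (0:ℝ) < s := by linarith
  -- from the counting hypothesis, s ≤ m * logb 2 (2sΔ+1)
  have hlog : (s:ℝ) ≤ m * Real.logb 2 (2 * s * Δ + 1) := by
    have hcast : ((2:ℝ)) ^ s ≤ (2 * (s:ℝ) * Δ + 1) ^ m := by
      have := h
      have h' : ((2 ^ s : ℕ) : ℝ) ≤ (((2 * s * Δ + 1) ^ m : ℕ) : ℝ) := by
        exact_mod_cast this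
      push_cast at h'
      exact h'
    have hmono := Real.logb_le_logb_of_le one_lt_two
      (show (0:ℝ) < 2 ^ s by positivity) hcast
    rw [Real.logb_pow, Real.logb_pow,
      Real.logb_self_eq_one one_lt_two] at hmono
    simpa using hmono
  -- bound logb 2 (2sΔ+1)
  have hb1 : (2 * (s:ℝ) * Δ + 1) ≤ 4 * s * Δ := by nlinarith
  have step1 : Real.logb 2 (2 * (s:ℝ) * Δ + 1) ≤ Real.logb 2 (4 * s * Δ) :=
    Real.logb_le_logb_of_le one_lt_two (by positivity) hb1
  have step2 : Real.logb 2 (4 * (s:ℝ) * Δ) = Real.logb 2 (4 * Δ) + Real.logb 2 s := by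
    have e : (4:ℝ) * s * Δ = (4 * Δ) * s := by ring
    rw [e, Real.logb_mul (by positivity) (by positivity)]
  have step3 : Real.logb 2 (s:ℝ) ≤ Real.logb 2 S0 + ((s:ℝ) - S0) / (S0 * Real.log 2) :=
    logb_tangent_aux hS0pos hsS0.le
  have hLpos : (0:ℝ) < L := by linarith
  have step4 : Real.logb 2 S0 = Real.logb 2 (2 * m) + Real.logb 2 L := by
    have e : S0 = (2 * (m:ℝ)) * L := by rw [hS0def]
    rw [e, Real.logb_mul (by positivity) (by positivity)]
  have step5 : Real.logb 2 (4 * (Δ:ℝ)) + Real.logb 2 (2 * (m:ℝ)) = 1 + L := by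
    rw [← Real.logb_mul (by positivity) (by positivity)]
    have e : (4 * (Δ:ℝ)) * (2 * m) = 2 * (4 * m * Δ) := by ring
    rw [e, Real.logb_mul (by norm_num) (by positivity),
      Real.logb_self_eq_one one_lt_two]
  have step6 : Real.logb 2 L ≤ 1 + (L - 2) / (2 * Real.log 2) := by
    have := logb_tangent_aux (show (0:ℝ) < 2 by norm_num) hL2
    rwa [Real.logb_self_eq_one one_lt_two] at this
  -- combine
  have hA : Real.logb 2 (2 * (s:ℝ) * Δ + 1) ≤
      (L + 2 + (L - 2) / (2 * Real.log 2)) + ((s:ℝ) - S0) / (S0 * Real.log 2) := by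
    calc Real.logb 2 (2 * (s:ℝ) * Δ + 1)
        ≤ Real.logb 2 (4 * Δ) + Real.logb 2 s := by rw [← step2]; exact step1
      _ ≤ Real.logb 2 (4 * Δ) + Real.logb 2 S0 + ((s:ℝ) - S0) / (S0 * Real.log 2) := by
          linarith [step3]
      _ = (1 + L) + Real.logb 2 L + ((s:ℝ) - S0) / (S0 * Real.log 2) := by
          rw [step4]; linarith [step5]
      _ ≤ (L + 2 + (L - 2) / (2 * Real.log 2)) + ((s:ℝ) - S0) / (S0 * Real.log 2) := by
          linarith [step6]
  have e1 : (L - 2) / (2 * Real.log 2) ≤ L - 2 :=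
    div_le_self (by linarith) (by linarith)
  have hB : (m:ℝ) * (L + 2 + (L - 2) / (2 * Real.log 2)) ≤ S0 := by
    have h' : L + 2 + (L - 2) / (2 * Real.log 2) ≤ 2 * L := by linarith
    calc (m:ℝ) * (L + 2 + (L - 2) / (2 * Real.log 2)) ≤ m * (2 * L) :=
          mul_le_mul_of_nonneg_left h' (by positivity)
      _ = S0 := by rw [hS0def]; ring
  have hC : (m:ℝ) * (((s:ℝ) - S0) / (S0 * Real.log 2)) ≤ ((s:ℝ) - S0) / 2 := by
    have hfrac : (m:ℝ) / (S0 * Real.log 2) ≤ 1 / 2 := by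
      rw [div_le_div_iff₀ (by positivity) (by norm_num)]
      have : (2:ℝ) * m ≤ S0 * Real.log 2 := by nlinarith
      linarith
    calc (m:ℝ) * (((s:ℝ) - S0) / (S0 * Real.log 2))
        = ((s:ℝ) - S0) * ((m:ℝ) / (S0 * Real.log 2)) := by ring
      _ ≤ ((s:ℝ) - S0) * (1 / 2) := mul_le_mul_of_nonneg_left hfrac (by linarith)
      _ = ((s:ℝ) - S0) / 2 := by ring
  have hfinal : (s:ℝ) ≤ S0 + ((s:ℝ) - S0) / 2 := by
    have h1 : (s:ℝ) ≤ m * ((L + 2 + (L - 2) / (2 * Real.log 2)) +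
        ((s:ℝ) - S0) / (S0 * Real.log 2)) :=
      hlog.trans (mul_le_mul_of_nonneg_left hA (by positivity))
    have h2 : (m:ℝ) * ((L + 2 + (L - 2) / (2 * Real.log 2)) +
        ((s:ℝ) - S0) / (S0 * Real.log 2)) =
        (m:ℝ) * (L + 2 + (L - 2) / (2 * Real.log 2)) +
        (m:ℝ) * (((s:ℝ) - S0) / (S0 * Real.log 2)) := by ring
    linarith
  linarith

/-- Support-reduction step: a `{-1,0,1}` kernel vector supported on the support
of `x` with a `+1` entry lets us strictly reduce the support of `x`. -/
lemma reduce_step {m t : ℕ} (B : Matrix (Fin m) (Fin t) ℤ)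
    (x : Fin t → ℤ) (hx0 : ∀ j, 0 ≤ x j)
    (g : Fin t → ℤ) (hg1 : ∀ j, g j = -1 ∨ g j = 0 ∨ g j = 1)
    (hgsupp : ∀ j, g j ≠ 0 → x j ≠ 0) (hBg : B.mulVec g = 0)
    (j₀ : Fin t) (hj₀ : g j₀ = 1) :
    ∃ x' : Fin t → ℤ, (∀ j, 0 ≤ x' j) ∧ B.mulVec x' = B.mulVec x ∧
      (univ.filter (fun j => x' j ≠ 0)).card < (univ.filter (fun j => x j ≠ 0)).card := by
  classical
  set F : Finset (Fin t) := univ.filter (fun j => g j = 1) with hF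
  have hFne : F.Nonempty := ⟨j₀, by simp [hF, hj₀]⟩
  obtain ⟨j₁, hj₁F, hj₁⟩ := Finset.exists_mem_eq_inf' hFne x
  set lam : ℤ := F.inf' hFne x with hlam
  have hlam_le : ∀ j ∈ F, lam ≤ x j := fun j hj => Finset.inf'_le x hj
  have hlam0 : 0 ≤ lam := hj₁ ▸ hx0 j₁
  have hgj₁ : g j₁ = 1 := by simpa [hF] using hj₁F
  refine ⟨x - lam • g, ?_, ?_, ?_⟩
  · intro j
    rcases hg1 j with h | h | h
    · simp only [Pi.sub_apply, Pi.smul_apply, smul_eq_mul, h]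
      linarith [hx0 j]
    · simp only [Pi.sub_apply, Pi.smul_apply, smul_eq_mul, h]
      linarith [hx0 j]
    · simp only [Pi.sub_apply, Pi.smul_apply, smul_eq_mul, h]
      have : lam ≤ x j := hlam_le j (by simp [hF, h])
      linarith
  · rw [Matrix.mulVec_sub, Matrix.mulVec_smul, hBg, smul_zero, sub_zero]
  · apply Finset.card_lt_card
    rw [Finset.ssubset_iff_of_subset]
    · refine ⟨j₁, ?_, ?_⟩
      · simp only [mem_filter, mem_univ, true_and]
        exact hgsupp j₁ (by rw [hgj₁]; norm_num)
      · simp only [mem_filter, mem_univ, true_and, not_not, Pi.sub_apply,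
          Pi.smul_apply, smul_eq_mul, hgj₁]
        rw [← hj₁]
        ring
    · intro j hj
      simp only [mem_filter, mem_univ, true_and] at hj ⊢
      intro hxj
      apply hj
      have hgj : g j = 0 := by
        by_contra hg
        exact hgsupp j hg hxj
      simp [hxj, hgj]

/-- Eisenbrand–Shmonin support bound for a single block. -/
lemma block_sparse {m t Δ : ℕ} (hm : 1 ≤ m) (hΔ : 1 ≤ Δ)
    (B : Matrix (Fin m) (Fin t) ℤ) (hB : ∀ i j, |B i j| ≤ (Δ:ℤ))
    (y : Fin t → ℤ) (hy : ∀ j, 0 ≤ y j) :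
    ∃ x : Fin t → ℤ, (∀ j, 0 ≤ x j) ∧ B.mulVec x = B.mulVec y ∧
      (((univ.filter (fun j => x j ≠ 0)).card : ℝ)) ≤
        2 * m * Real.logb 2 (4 * m * Δ) := by
  classical
  set c := B.mulVec y with hc
  have hex : ∃ s : ℕ, ∃ x : Fin t → ℤ, (∀ j, 0 ≤ x j) ∧ B.mulVec x = c ∧
      (univ.filter (fun j => x j ≠ 0)).card = s := ⟨_, y, hy, rfl, rfl⟩
  obtain ⟨x, hx0, hxc, hxcard⟩ := Nat.find_spec hex
  set s := Nat.find hex with hs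
  refine ⟨x, hx0, hxc, ?_⟩
  rw [hxcard]
  apply analytic_aux m Δ s hm hΔ
  by_contra hcount
  push_neg at hcount
  set supp : Finset (Fin t) := univ.filter (fun j => x j ≠ 0) with hsuppdef
  have hsupp : supp.card = s := hxcard
  set box : Finset (Fin m → ℤ) :=
    Fintype.piFinset (fun _ => Finset.Icc (-((s:ℤ) * Δ)) ((s:ℤ) * Δ)) with hbox
  have hboxcard : box.card = (2 * s * Δ + 1) ^ m := by
    rw [hbox, Fintype.card_piFinset]
    have hcard : (Finset.Icc (-((s:ℤ) * Δ)) ((s:ℤ) * Δ)).card = 2 * s * Δ + 1 := by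
      rw [Int.card_Icc]
      have e : ((s:ℤ) * Δ + 1 - -((s:ℤ) * Δ)) = ((2 * s * Δ + 1 : ℕ) : ℤ) := by
        push_cast; ring
      rw [e, Int.toNat_natCast]
    simp [hcard]
  have hmaps : ∀ S ∈ supp.powerset, (fun i => ∑ j ∈ S, B i j) ∈ box := by
    intro S hS
    rw [Finset.mem_powerset] at hS
    have hScard : S.card ≤ s := by
      have := Finset.card_le_card hS
      omega
    rw [hbox, Fintype.mem_piFinset]
    intro i
    rw [Finset.mem_Icc, ← abs_le]
    calc |∑ j ∈ S, B i j| ≤ ∑ j ∈ S, |B i j| := Finset.abs_sum_le_sum_abs _ _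
      _ ≤ S.card • (Δ:ℤ) := Finset.sum_le_card_nsmul _ _ _ (fun j _ => hB i j)
      _ = (S.card : ℤ) * Δ := by simp [nsmul_eq_mul]
      _ ≤ (s:ℤ) * Δ := by
          have : (S.card : ℤ) ≤ (s:ℤ) := by exact_mod_cast hScard
          have hΔ0 : (0:ℤ) ≤ Δ := by positivity
          exact mul_le_mul_of_nonneg_right this hΔ0
  have hlt : box.card < supp.powerset.card := by
    rw [hboxcard, Finset.card_powerset, hsupp]
    exact hcount
  obtain ⟨S, hS, T, hT, hST, hfeq⟩ :=
    Finset.exists_ne_map_eq_of_card_lt_of_maps_to hlt hmaps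
  -- find an element in one set but not the other; WLOG in S \ T
  have key : ∀ S T : Finset (Fin t), S ⊆ supp → T ⊆ supp →
      ((fun i => ∑ j ∈ S, B i j) = fun i => ∑ j ∈ T, B i j) →
      ∀ j₀, j₀ ∈ S → j₀ ∉ T → False := by
    intro S T hS hT hfeq j₀ hj₀S hj₀T
    set g : Fin t → ℤ := fun j => (if j ∈ S then (1:ℤ) else 0) - (if j ∈ T then 1 else 0)
      with hg
    have hg1 : ∀ j, g j = -1 ∨ g j = 0 ∨ g j = 1 := by
      intro j
      rw [hg]
      by_cases h1 : j ∈ S <;> by_cases h2 : j ∈ T <;> simp [h1, h2]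
    have hgsupp : ∀ j, g j ≠ 0 → x j ≠ 0 := by
      intro j hgj
      have : j ∈ S ∨ j ∈ T := by
        by_contra hcon
        push_neg at hcon
        apply hgj
        rw [hg]
        simp [hcon.1, hcon.2]
      rcases this with h | h
      · have := hS h
        rw [hsuppdef, mem_filter] at this
        exact this.2
      · have := hT h
        rw [hsuppdef, mem_filter] at this
        exact this.2
    have hBg : B.mulVec g = 0 := by
      funext i
      have e1 : ∀ (U : Finset (Fin t)),
          (∑ j, B i j * (if j ∈ U then (1:ℤ) else 0)) = ∑ j ∈ U, B i j := by
        intro U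
        simp only [mul_ite, mul_one, mul_zero]
        rw [Finset.sum_ite_mem, Finset.univ_inter]
      have e3 : B.mulVec g i = (∑ j, B i j * (if j ∈ S then (1:ℤ) else 0)) -
          (∑ j, B i j * (if j ∈ T then (1:ℤ) else 0)) := by
        simp only [Matrix.mulVec, dotProduct, hg]
        rw [← Finset.sum_sub_distrib]
        exact Finset.sum_congr rfl fun j _ => by ring
      have e4 : (0 : Fin m → ℤ) i = 0 := rfl
      rw [e3, e4, e1 S, e1 T, congrFun hfeq i, sub_self]
    have hj₀ : g j₀ = 1 := by rw [hg]; simp [hj₀S, hj₀T]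
    obtain ⟨x', hx'0, hx'c, hx'card⟩ :=
      reduce_step B x hx0 g hg1 hgsupp hBg j₀ hj₀
    rw [← hsuppdef, hsupp] at hx'card
    exact Nat.find_min hex hx'card ⟨x', hx'0, hx'c.trans hxc, rfl⟩
  have hSsupp : S ⊆ supp := Finset.mem_powerset.mp hS
  have hTsupp : T ⊆ supp := Finset.mem_powerset.mp hT
  by_cases hcase : ∃ j₀, j₀ ∈ S ∧ j₀ ∉ T
  · obtain ⟨j₀, h1, h2⟩ := hcase
    exact key S T hSsupp hTsupp hfeq j₀ h1 h2
  · push_neg at hcase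
    have hsub : S ⊆ T := fun a ha => hcase a ha
    obtain ⟨j₀, h1, h2⟩ :=
      Finset.not_subset.mp (fun h => hST (Finset.Subset.antisymm hsub h))
    exact key T S hTsupp hSsupp hfeq.symm j₀ h1 h2

/-- Support bound for combinatorial n-fold ILPs: any feasible system has a
nonnegative integer solution whose blocks each have support at most
`2(r+1)·log₂(4(r+1)Δ)`. -/
theorem stmt9 (n r Δ : ℕ) (hΔ : 1 ≤ Δ) (t : Fin n → ℕ)
    (A : (k : Fin n) → Matrix (Fin r) (Fin (t k)) ℤ)
    (hA : ∀ k i j, |A k i j| ≤ (Δ : ℤ))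
    (bup : Fin r → ℤ) (blow : Fin n → ℤ)
    (hfeas : ∃ y : (k : Fin n) → Fin (t k) → ℤ, (∀ k j, 0 ≤ y k j) ∧
      (∑ k, (A k).mulVec (y k)) = bup ∧ (∀ k, ∑ j, y k j = blow k)) :
    ∃ x : (k : Fin n) → Fin (t k) → ℤ, (∀ k j, 0 ≤ x k j) ∧
      (∑ k, (A k).mulVec (x k)) = bup ∧ (∀ k, ∑ j, x k j = blow k) ∧
      ∀ k, ((Finset.univ.filter (fun j => x k j ≠ 0)).card : ℝ) ≤
        2 * (r + 1) * Real.logb 2 (4 * (r + 1) * Δ) := by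
  classical
  obtain ⟨y, hy0, hyup, hylow⟩ := hfeas
  -- the block matrix with a row of ones appended
  set BB : (k : Fin n) → Matrix (Fin (r + 1)) (Fin (t k)) ℤ :=
    fun k => Fin.snoc (A k) (fun _ => 1) with hBB
  have hBBbound : ∀ k i j, |BB k i j| ≤ (Δ:ℤ) := by
    intro k i j
    induction i using Fin.lastCases with
    | last =>
        rw [hBB]
        simp only [Fin.snoc_last]
        erw [Fin.snoc_last]
        simpa using (show (1:ℤ) ≤ Δ by exact_mod_cast hΔ)
    | cast i =>
        rw [hBB]
        simp only [Fin.snoc_castSucc]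
        erw [Fin.snoc_castSucc]
        exact hA k i j
  have hmulcast : ∀ k (v : Fin (t k) → ℤ) (i : Fin r),
      (BB k).mulVec v (Fin.castSucc i) = (A k).mulVec v i := by
    intro k v i
    simp [hBB, Matrix.mulVec, dotProduct, Fin.snoc_castSucc]
    erw [Fin.snoc_castSucc]
  have hmullast : ∀ k (v : Fin (t k) → ℤ),
      (BB k).mulVec v (Fin.last r) = ∑ j, v j := by
    intro k v
    simp [hBB, Matrix.mulVec, dotProduct, Fin.snoc_last]
    erw [Fin.snoc_last]
    simp
  choose x hx0 hxeq hxcard using fun k =>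
    block_sparse (m := r + 1) (t := t k) (Δ := Δ) (Nat.le_add_left 1 r) hΔ
      (BB k) (hBBbound k) (y k) (hy0 k)
  refine ⟨x, hx0, ?_, ?_, ?_⟩
  · rw [← hyup]
    apply Finset.sum_congr rfl
    intro k _
    funext i
    have := congrFun (hxeq k) (Fin.castSucc i)
    rwa [hmulcast, hmulcast] at this
  · intro k
    have := congrFun (hxeq k) (Fin.last r)
    rw [hmullast, hmullast] at this
    rw [this, hylow k]
  · intro k
    have h := hxcard k
    push_cast at h ⊢
    convert h using 2 <;> push_cast <;> ring
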